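/- Let M ⊆ [ω]^ω not be nowhere Ramsey, and let 𝓕 be a point-finite cover of M by nowhere Ramsey sets. Suppose for every Ellentuck basic set [a, A] with M ∩ [a, A] ≠ ∅ there is an Ellentuck basic set [b, B] ⊆ [a, A] (with M ∩ [b, B] ≠ ∅) such that {F ∩ [b, B] : F ∈ 𝓕} has cardinality continuum. Then there exists a subfamily 𝓕' ⊆ 𝓕 such that ⋃𝓕' is not completely Ramsey. -/

import Mathlib

open Cardinal

/-- The basic Ellentuck set `[a, A] = {B ∈ [ω]^ω : a ⊆ B ⊆ a ∪ A}`. -/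
def ELset (a : Finset ℕ) (A : Set ℕ) : Set (Set ℕ) :=
  {B | B.Infinite ∧ ↑a ⊆ B ∧ B ⊆ ↑a ∪ A}

/-- `M` is completely Ramsey. -/
def CompletelyRamsey (M : Set (Set ℕ)) : Prop :=
  ∀ (a : Finset ℕ) (A : Set ℕ), A.Infinite →
    ∃ B ⊆ A, B.Infinite ∧ (ELset a B ⊆ M ∨ ELset a B ∩ M = ∅)

/-- `M` is nowhere Ramsey. -/
def NowhereRamsey (M : Set (Set ℕ)) : Prop :=
  ∀ (a : Finset ℕ) (A : Set ℕ), A.Infinite →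
    ∃ B ⊆ A, B.Infinite ∧ ELset a B ∩ M = ∅

/-- A family of sets is point-finite if every point lies in only finitely many members. -/
def PointFinite {X : Type*} (F : Set (Set X)) : Prop :=
  ∀ x : X, {G ∈ F | x ∈ G}.Finite

lemma union_mem_ELset (a : Finset ℕ) {A : Set ℕ} (hA : A.Infinite) :
    (↑a ∪ A) ∈ ELset a A :=
  ⟨hA.mono Set.subset_union_right, Set.subset_union_left, subset_rfl⟩

lemma ELset_mono {a : Finset ℕ} {A B : Set ℕ} (h : A ⊆ B) :
    ELset a A ⊆ ELset a B := by
  rintro X ⟨h1, h2, h3⟩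
  exact ⟨h1, h2, h3.trans (Set.union_subset_union_right _ h)⟩

lemma ELset_sub {a a' : Finset ℕ} {A A' : Set ℕ}
    (h1 : (a : Set ℕ) ⊆ (a' : Set ℕ)) (h2 : (a' : Set ℕ) ⊆ ↑a ∪ A) (h3 : A' ⊆ A) :
    ELset a' A' ⊆ ELset a A := by
  rintro X ⟨hi, hs1, hs2⟩
  refine ⟨hi, h1.trans hs1, hs2.trans ?_⟩
  apply Set.union_subset h2
  exact h3.trans Set.subset_union_right

lemma mk_setNat : #(Set ℕ) = continuum := by
  rw [mk_set, mk_nat, two_power_aleph0]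

noncomputable abbrev Idx : Type := (Cardinal.continuum.ord).ToType

lemma mk_Iio_Idx (i : Idx) : #(Set.Iio i) < continuum := Cardinal.mk_Iio_ord_toType i

lemma exists_surj_Idx {τ : Type} (hne : Nonempty τ) (hle : #τ ≤ continuum) :
    ∃ π : Idx → τ, Function.Surjective π := by
  rw [← mk_ord_toType continuum] at hle
  obtain ⟨e⟩ := (Cardinal.le_def _ _).mp hle
  classical
  inhabit τ
  refine ⟨fun i => if h : ∃ t, e t = i then h.choose else default, fun t => ⟨e t, ?_⟩⟩
  have h : ∃ t', e t' = e t := ⟨t, rfl⟩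
  simp only [dif_pos h]
  exact e.injective h.choose_spec

section GP

variable (M : Set (Set ℕ))

/-- `s` "rejects" `A` : every infinite `C ⊆ A` has `ELset s C` meeting `M`. -/
def Rejects (A : Set ℕ) (s : Finset ℕ) : Prop :=
  ∀ C, C ⊆ A → C.Infinite → (M ∩ ELset s C).Nonempty

lemma Rejects.mono {A A' : Set ℕ} {s : Finset ℕ} (h : Rejects M A s) (hsub : A' ⊆ A) :
    Rejects M A' s := fun C hC hCi => h C (hC.trans hsub) hCi

/-- Galvin–Prikry style one-step lemma. -/
lemma K1 {A : Set ℕ} (hA : A.Infinite) (s : Finset ℕ) (hrej : Rejects M A s) :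
    ∃ A', A' ⊆ A ∧ A'.Infinite ∧ ∀ b ∈ A', Rejects M A' (insert b s) := by
  classical
  by_contra hcon
  push_neg at hcon
  -- hcon : ∀ A' ⊆ A, A'.Infinite → ∃ b ∈ A', ¬ Rejects M A' (insert b s)
  -- a step function producing new b, C'
  have step : ∀ (C : Set ℕ), C ⊆ A → C.Infinite → ∀ (used : Finset ℕ),
      ∃ (b : ℕ) (C' : Set ℕ), b ∈ C ∧ b ∉ used ∧ b ∉ s ∧ C' ⊆ C ∧ C'.Infinite ∧
        (M ∩ ELset (insert b s) C') = ∅ ∧ b ∉ C' := by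
    intro C hC hCi used
    have hA' : (C \ (↑used ∪ ↑s) : Set ℕ).Infinite :=
      hCi.diff ((used.finite_toSet).union (s.finite_toSet))
    obtain ⟨b, hb, hnr⟩ := hcon (C \ (↑used ∪ ↑s)) ((Set.diff_subset).trans hC) hA'
    rw [Rejects] at hnr
    push_neg at hnr
    obtain ⟨C'', hC''sub, hC''inf, hC''⟩ := hnr
    refine ⟨b, C'' \ {b}, (Set.diff_subset hb), ?_, ?_, ?_, hC''inf.diff (Set.finite_singleton b), ?_, by simp⟩
    · intro h; exact (hb.2 (Set.mem_union_left _ h))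
    · intro h; exact (hb.2 (Set.mem_union_right _ h))
    · exact (Set.diff_subset.trans hC''sub).trans Set.diff_subset
    · rw [Set.eq_empty_iff_forall_notMem] at hC'' ⊢
      intro X hX
      exact hC'' X ⟨hX.1, ELset_mono Set.diff_subset hX.2⟩
  choose fb fC hb1 hb2 hb3 hC1 hC2 hC3 hC4 using step
  -- iterate
  let st : {C : Set ℕ // C ⊆ A ∧ C.Infinite} × Finset ℕ →
      {C : Set ℕ // C ⊆ A ∧ C.Infinite} × Finset ℕ :=
    fun p => ⟨⟨fC p.1.1 p.1.2.1 p.1.2.2 p.2,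
      (hC1 p.1.1 p.1.2.1 p.1.2.2 p.2).trans p.1.2.1, hC2 p.1.1 p.1.2.1 p.1.2.2 p.2⟩,
      insert (fb p.1.1 p.1.2.1 p.1.2.2 p.2) p.2⟩
  let chain : ℕ → {C : Set ℕ // C ⊆ A ∧ C.Infinite} × Finset ℕ :=
    fun n => st^[n] ⟨⟨A, subset_rfl, hA⟩, ∅⟩
  have chain_succ : ∀ n, chain (n + 1) = st (chain n) := by
    intro n
    simp only [chain, Function.iterate_succ_apply']
  set b : ℕ → ℕ := fun n => fb (chain n).1.1 (chain n).1.2.1 (chain n).1.2.2 (chain n).2 with hbdef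
  have hCsucc : ∀ n, (chain (n+1)).1.1 = fC (chain n).1.1 (chain n).1.2.1 (chain n).1.2.2 (chain n).2 := by
    intro n; rw [chain_succ]
  have husucc : ∀ n, (chain (n+1)).2 = insert (b n) (chain n).2 := by
    intro n; rw [chain_succ]
  have hmono : ∀ n, (chain (n+1)).1.1 ⊆ (chain n).1.1 := by
    intro n; rw [hCsucc]; exact hC1 _ _ _ _
  have hmono' : ∀ m n, n ≤ m → (chain m).1.1 ⊆ (chain n).1.1 := by
    intro m n h
    induction m with
    | zero => simp_all
    | succ k ih =>
      rcases Nat.lt_or_ge n (k+1) with h' | h'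
      · exact (hmono k).trans (ih (Nat.lt_succ_iff.mp h'))
      · have : n = k + 1 := le_antisymm h h'
        subst this; rfl
  have hbC : ∀ n, b n ∈ (chain n).1.1 := fun n => hb1 _ _ _ _
  have hbnotC : ∀ n, b n ∉ (chain (n+1)).1.1 := by
    intro n; rw [hCsucc]; exact hC4 _ _ _ _
  have hbne : ∀ m n, m < n → b m ≠ b n := by
    intro m n h hEq
    exact hbnotC m ((hmono' n (m+1) h) (hEq ▸ hbC n))
  have hbinj : Function.Injective b := by
    intro m n hmn
    by_contra hne
    rcases Nat.lt_or_ge m n with h | h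
    · exact hbne m n h hmn
    · exact hbne n m (lt_of_le_of_ne h (Ne.symm hne)) hmn.symm
  have hrange : Set.range b ⊆ A := by
    rintro x ⟨n, rfl⟩
    exact (chain n).1.2.1 (hbC n)
  have hrinf : (Set.range b).Infinite := Set.infinite_range_of_injective hbinj
  obtain ⟨X, hXM, hXinf, hXs, hXsub⟩ := hrej (Set.range b) hrange hrinf
  have hne : (X \ (↑s : Set ℕ)).Nonempty := (hXinf.diff s.finite_toSet).nonempty
  have hex : ∃ n, b n ∈ X := by
    obtain ⟨x, hx1, hx2⟩ := hne
    rcases hXsub hx1 with h | h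
    · exact absurd h hx2
    · obtain ⟨n, rfl⟩ := h
      exact ⟨n, hx1⟩
  classical
  let n₀ := Nat.find hex
  have hn₀ : b n₀ ∈ X := Nat.find_spec hex
  have hmem : X ∈ ELset (insert (b n₀) s) ((chain (n₀+1)).1.1) := by
    refine ⟨hXinf, ?_, ?_⟩
    · intro z hz
      simp only [Finset.coe_insert, Set.mem_insert_iff] at hz
      rcases hz with rfl | hz
      · exact hn₀
      · exact hXs hz
    · intro z hz
      rcases hXsub hz with h | h
      · exact Set.mem_union_left _ (by simp only [Finset.coe_insert, Set.mem_insert_iff]; right; exact h)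
      · obtain ⟨m, rfl⟩ := h
        rcases Nat.lt_or_ge m n₀ with hlt | hge
        · exact absurd hz (by simpa using Nat.find_min hex hlt)
        · rcases Nat.eq_or_lt_of_le hge with rfl | hgt
          · exact Set.mem_union_left _ (by simp)
          · exact Set.mem_union_right _ (hmono' m (n₀+1) hgt (hbC m))
  have hempty : (M ∩ ELset (insert (b n₀) s) ((chain (n₀+1)).1.1)) = ∅ := by
    rw [hCsucc]
    exact hC3 _ _ _ _
  rw [Set.eq_empty_iff_forall_notMem] at hempty
  exact hempty X ⟨hXM, hmem⟩


lemma K1star (L : List (Finset ℕ)) {A : Set ℕ} (hA : A.Infinite)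
    (hrej : ∀ t ∈ L, Rejects M A t) :
    ∃ A', A' ⊆ A ∧ A'.Infinite ∧ ∀ t ∈ L, ∀ b ∈ A', Rejects M A' (insert b t) := by
  induction L generalizing A with
  | nil => exact ⟨A, subset_rfl, hA, by simp⟩
  | cons t L ih =>
    obtain ⟨A₁, hA₁sub, hA₁inf, hA₁⟩ := ih hA (fun u hu => hrej u (List.mem_cons_of_mem _ hu))
    obtain ⟨A₂, hA₂sub, hA₂inf, hA₂⟩ :=
      K1 M hA₁inf t (Rejects.mono M (hrej t List.mem_cons_self) hA₁sub)
    refine ⟨A₂, hA₂sub.trans hA₁sub, hA₂inf, ?_⟩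
    intro u hu bb hbb
    rcases List.mem_cons.mp hu with rfl | hu
    · exact hA₂ bb hbb
    · exact Rejects.mono M (hA₁ u hu bb (hA₂sub hbb)) hA₂sub

lemma exists_Mdense (a₀ : Finset ℕ) (A₀ : Set ℕ) (hA₀ : A₀.Infinite)
    (hw : ∀ B, B ⊆ A₀ → B.Infinite → (M ∩ ELset a₀ B).Nonempty) :
    ∃ (c : Finset ℕ) (C : Set ℕ), C.Infinite ∧
      ∀ (c' : Finset ℕ) (D : Set ℕ), D.Infinite → ELset c' D ⊆ ELset c C →
        (M ∩ ELset c' D).Nonempty := by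
  classical
  by_contra hQ
  push_neg at hQ
  -- step function for the fusion
  have step : ∀ (C : Set ℕ), C ⊆ A₀ → C.Infinite → ∀ (bs : Finset ℕ),
      (∀ t ⊆ bs, Rejects M C (a₀ ∪ t)) →
      ∃ (bn : ℕ) (C' : Set ℕ), bn ∈ C ∧ bn ∉ bs ∧ bn ∉ a₀ ∧ C' ⊆ C ∧ C'.Infinite ∧
        bn ∉ C' ∧ (∀ t ⊆ insert bn bs, Rejects M C' (a₀ ∪ t)) := by
    intro C hC hCi bs hrej
    have hrejL : ∀ u ∈ (bs.powerset.toList).map (a₀ ∪ ·), Rejects M C u := by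
      intro u hu
      simp only [List.mem_map, Finset.mem_toList, Finset.mem_powerset] at hu
      obtain ⟨t, ht, rfl⟩ := hu
      exact hrej t ht
    obtain ⟨A', hA'sub, hA'inf, hA'⟩ := K1star M _ hCi hrejL
    have hne : (A' \ (↑a₀ ∪ ↑bs) : Set ℕ).Nonempty :=
      (hA'inf.diff ((a₀.finite_toSet).union (bs.finite_toSet))).nonempty
    obtain ⟨bn, hbn⟩ := hne
    refine ⟨bn, A' \ {bn}, hA'sub hbn.1, ?_, ?_, Set.diff_subset.trans hA'sub,
      hA'inf.diff (Set.finite_singleton bn), by simp, ?_⟩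
    · intro h; exact hbn.2 (Set.mem_union_right _ h)
    · intro h; exact hbn.2 (Set.mem_union_left _ h)
    · intro t ht
      by_cases hbt : bn ∈ t
      · have ht' : t.erase bn ⊆ bs := by
          intro x hx
          rcases Finset.mem_insert.mp (ht (Finset.mem_of_mem_erase hx)) with rfl | h
          · exact absurd rfl (Finset.ne_of_mem_erase hx)
          · exact h
        have hmem : (a₀ ∪ t.erase bn) ∈ (bs.powerset.toList).map (a₀ ∪ ·) := by
          simp only [List.mem_map, Finset.mem_toList, Finset.mem_powerset]
          exact ⟨t.erase bn, ht', rfl⟩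
        have h1 := hA' _ hmem bn hbn.1
        have : insert bn (a₀ ∪ t.erase bn) = a₀ ∪ t := by
          rw [← Finset.union_insert, Finset.insert_erase hbt]
        rw [this] at h1
        exact Rejects.mono M h1 Set.diff_subset
      · have ht' : t ⊆ bs := fun x hx => by
          rcases Finset.mem_insert.mp (ht hx) with rfl | h
          · exact absurd hx hbt
          · exact h
        exact Rejects.mono M (hrej t ht') (Set.diff_subset.trans hA'sub)
  choose fb fC h1 h2 h3 h4 h5 h6 h7 using step
  -- fusion chain
  let St := {p : Set ℕ × Finset ℕ // p.1 ⊆ A₀ ∧ p.1.Infinite ∧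
    ∀ t ⊆ p.2, Rejects M p.1 (a₀ ∪ t)}
  let st : St → St := fun p =>
    ⟨(fC p.1.1 p.2.1 p.2.2.1 p.1.2 p.2.2.2, insert (fb p.1.1 p.2.1 p.2.2.1 p.1.2 p.2.2.2) p.1.2),
      (h4 _ _ _ _ _).trans p.2.1, h5 _ _ _ _ _, h7 _ _ _ _ _⟩
  have hbase : ∀ t ⊆ (∅ : Finset ℕ), Rejects M A₀ (a₀ ∪ t) := by
    intro t ht
    rw [Finset.subset_empty.mp ht, Finset.union_empty]
    exact fun C hC hCi => hw C hC hCi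
  let chain : ℕ → St := fun n => st^[n] ⟨(A₀, ∅), subset_rfl, hA₀, hbase⟩
  have chain_succ : ∀ n, chain (n + 1) = st (chain n) := by
    intro n; simp only [chain, Function.iterate_succ_apply']
  set b : ℕ → ℕ :=
    fun n => fb (chain n).1.1 (chain n).2.1 (chain n).2.2.1 (chain n).1.2 (chain n).2.2.2 with hbdef
  have hCsucc : ∀ n, (chain (n+1)).1.1
      = fC (chain n).1.1 (chain n).2.1 (chain n).2.2.1 (chain n).1.2 (chain n).2.2.2 := by
    intro n; rw [chain_succ]
  have hbssucc : ∀ n, (chain (n+1)).1.2 = insert (b n) (chain n).1.2 := by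
    intro n; rw [chain_succ]
  have hmono : ∀ m n, n ≤ m → (chain m).1.1 ⊆ (chain n).1.1 := by
    intro m n h
    induction m with
    | zero => simp_all
    | succ k ih =>
      rcases Nat.lt_or_ge n (k+1) with h' | h'
      · refine subset_trans ?_ (ih (Nat.lt_succ_iff.mp h'))
        rw [hCsucc]; exact h4 _ _ _ _ _
      · have : n = k + 1 := le_antisymm h h'
        subst this; rfl
  have hbsmono : ∀ m n, n ≤ m → (chain n).1.2 ⊆ (chain m).1.2 := by
    intro m n h
    induction m with
    | zero => simp_all
    | succ k ih =>
      rcases Nat.lt_or_ge n (k+1) with h' | h'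
      · refine subset_trans (ih (Nat.lt_succ_iff.mp h')) ?_
        rw [hbssucc]; exact Finset.subset_insert _ _
      · have : n = k + 1 := le_antisymm h h'
        subst this; rfl
  have hbC : ∀ n, b n ∈ (chain n).1.1 := fun n => h1 _ _ _ _ _
  have hbnotC : ∀ n, b n ∉ (chain (n+1)).1.1 := by
    intro n; rw [hCsucc]; exact h6 _ _ _ _ _
  have hbbs : ∀ n, b n ∈ (chain (n+1)).1.2 := by
    intro n; rw [hbssucc]; exact Finset.mem_insert_self _ _
  have hbslt : ∀ m n, m < n → b m ∈ (chain n).1.2 :=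
    fun m n h => hbsmono n (m+1) h (hbbs m)
  have hbne : ∀ m n, m < n → b m ≠ b n := by
    intro m n h hEq
    exact hbnotC m ((hmono n (m+1) h) (hEq ▸ hbC n))
  have hbinj : Function.Injective b := by
    intro m n hmn
    by_contra hne
    rcases Nat.lt_or_ge m n with h | h
    · exact hbne m n h hmn
    · exact hbne n m (lt_of_le_of_ne h (Ne.symm hne)) hmn.symm
  have hrangesub : Set.range b ⊆ A₀ := by
    rintro x ⟨n, rfl⟩; exact (chain n).2.1 (hbC n)
  have hranginf : (Set.range b).Infinite := Set.infinite_range_of_injective hbinj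
  -- apply density at (a₀, range b)
  obtain ⟨c'', Dd'', hDinf, hsub, hempty⟩ :=
    hQ a₀ (Set.range b) hranginf
  have hpt : (↑c'' ∪ Dd'') ∈ ELset a₀ (Set.range b) := hsub (union_mem_ELset c'' hDinf)
  obtain ⟨hptinf, hpt1, hpt2⟩ := hpt
  set c₃ : Finset ℕ := c'' ∪ a₀ with hc₃def
  set D₃ : Set ℕ := Dd'' \ ↑c₃ with hD₃def
  have hD₃inf : D₃.Infinite := hDinf.diff c₃.finite_toSet
  have hsub₃ : ELset c₃ D₃ ⊆ ELset c'' Dd'' := by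
    apply ELset_sub
    · intro x hx; simp only [hc₃def, Finset.coe_union, Set.mem_union]; left; exact hx
    · intro x hx
      simp only [hc₃def, Finset.coe_union, Set.mem_union] at hx
      rcases hx with hx | hx
      · exact Set.mem_union_left _ hx
      · exact hpt1 hx
    · exact Set.diff_subset
  have hempty₃ : M ∩ ELset c₃ D₃ = ∅ := by
    rw [Set.eq_empty_iff_forall_notMem] at hempty ⊢
    intro X hX
    exact hempty X ⟨hX.1, hsub₃ hX.2⟩
  set t : Finset ℕ := c₃ \ a₀ with htdef
  have htB : ∀ x ∈ t, x ∈ Set.range b := by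
    intro x hx
    rw [htdef, Finset.mem_sdiff] at hx
    have hx1 : x ∈ (↑c'' ∪ Dd'' : Set ℕ) := by
      rw [hc₃def] at hx
      rcases Finset.mem_union.mp hx.1 with h | h
      · exact Set.mem_union_left _ h
      · exact absurd h hx.2
    rcases hpt2 hx1 with h | h
    · exact absurd (by exact_mod_cast h) hx.2
    · exact h
  -- find a stage i with t ⊆ bs_i
  have hstage : ∀ (u : Finset ℕ), (∀ x ∈ u, x ∈ Set.range b) → ∃ i, ∀ x ∈ u, x ∈ (chain i).1.2 := by
    intro u
    induction u using Finset.induction_on with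
    | empty => exact fun _ => ⟨0, by simp⟩
    | @insert x u' hxu ih =>
      intro hmem
      obtain ⟨i₁, hi₁⟩ := ih (fun z hz => hmem z (Finset.mem_insert_of_mem hz))
      obtain ⟨m, rfl⟩ := hmem x (Finset.mem_insert_self _ _)
      refine ⟨max i₁ (m+1), ?_⟩
      intro z hz
      rcases Finset.mem_insert.mp hz with rfl | hz
      · exact hbsmono _ (m+1) (le_max_right _ _) (hbbs m)
      · exact hbsmono _ i₁ (le_max_left _ _) (hi₁ z hz)
  obtain ⟨i, hi⟩ := hstage t htB
  have hrej_i : Rejects M (chain i).1.1 (a₀ ∪ t) := (chain i).2.2.2 t (fun x hx => hi x hx)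
  have hc₃eq : a₀ ∪ t = c₃ := by
    rw [htdef]
    exact Finset.union_sdiff_of_subset (by rw [hc₃def]; exact Finset.subset_union_right)
  rw [hc₃eq] at hrej_i
  set C₄ : Set ℕ := D₃ \ ↑((chain i).1.2) with hC₄def
  have hC₄inf : C₄.Infinite := hD₃inf.diff (Finset.finite_toSet _)
  have hC₄sub : C₄ ⊆ (chain i).1.1 := by
    intro z hz
    rw [hC₄def] at hz
    have hzD₃ : z ∈ D₃ := hz.1
    have hz1 : z ∈ (↑c'' ∪ Dd'' : Set ℕ) := Set.mem_union_right _ hzD₃.1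
    have hzrange : z ∈ Set.range b := by
      rcases hpt2 hz1 with h | h
      · exfalso
        apply hzD₃.2
        rw [hc₃def]
        simp only [Finset.coe_union, Set.mem_union]
        right; exact_mod_cast h
      · exact h
    obtain ⟨m, rfl⟩ := hzrange
    rcases Nat.lt_or_ge m i with hlt | hge
    · exact absurd (hbslt m i hlt) (by simpa using hz.2)
    · exact hmono m i hge (hbC m)
  obtain ⟨X, hXM, hXel⟩ := hrej_i C₄ hC₄sub hC₄inf
  have : X ∈ M ∩ ELset c₃ D₃ := ⟨hXM, ELset_mono (by rw [hC₄def]; exact Set.diff_subset) hXel⟩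
  rw [hempty₃] at this
  exact this

end GP

section Round

open scoped Classical

variable (𝓕 : Set (Set (Set ℕ))) (EXCL : Set (Set (Set ℕ))) (c : Finset ℕ)

abbrev Str : Type := Set (Set ℕ) × Set ℕ × Set ℕ

noncomputable def CORE (B : Set ℕ) (CH : Set (Set (Set ℕ))) (YB : Set (Set ℕ)) : Str :=
  if h1 : ∃ E, E ⊆ B ∧ E.Infinite ∧ ELset c E ∩ ⋃₀ CH = ∅ then
    if h2 : ∃ p : Set (Set ℕ) × Set ℕ, p.1 ∈ 𝓕 ∧
        p.1 ∉ (EXCL ∪ CH ∪ {G | G ∈ 𝓕 ∧ ((∃ y' ∈ YB, y' ∈ G) ∨ (↑c ∪ h1.choose) ∈ G)}) ∧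
        p.2 ∈ p.1 ∧ p.2 ∈ ELset c B
    then (h2.choose.1, h2.choose.2, ↑c ∪ h1.choose) else (∅, ∅, ∅)
  else (∅, ∅, ∅)

lemma CORE_spec (B : Set ℕ) (CH : Set (Set (Set ℕ))) (YB : Set (Set ℕ))
    (h1 : ∃ E, E ⊆ B ∧ E.Infinite ∧ ELset c E ∩ ⋃₀ CH = ∅)
    (hq : ∀ y : Set ℕ, ∃ p : Set (Set ℕ) × Set ℕ, p.1 ∈ 𝓕 ∧
        p.1 ∉ (EXCL ∪ CH ∪ {G | G ∈ 𝓕 ∧ ((∃ y' ∈ YB, y' ∈ G) ∨ y ∈ G)}) ∧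
        p.2 ∈ p.1 ∧ p.2 ∈ ELset c B) :
    (CORE 𝓕 EXCL c B CH YB).1 ∈ 𝓕 ∧
    (CORE 𝓕 EXCL c B CH YB).1 ∉ EXCL ∧
    (CORE 𝓕 EXCL c B CH YB).1 ∉ CH ∧
    (∀ y' ∈ YB, y' ∉ (CORE 𝓕 EXCL c B CH YB).1) ∧
    (CORE 𝓕 EXCL c B CH YB).2.2 ∉ (CORE 𝓕 EXCL c B CH YB).1 ∧
    (CORE 𝓕 EXCL c B CH YB).2.1 ∈ (CORE 𝓕 EXCL c B CH YB).1 ∧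
    (CORE 𝓕 EXCL c B CH YB).2.1 ∈ ELset c B ∧
    (CORE 𝓕 EXCL c B CH YB).2.2 ∈ ELset c B ∧
    (CORE 𝓕 EXCL c B CH YB).2.2 ∉ ⋃₀ CH := by
  classical
  obtain ⟨hE1, hE2, hE3⟩ := h1.choose_spec
  set y : Set ℕ := ↑c ∪ h1.choose with hydef
  have hval : CORE 𝓕 EXCL c B CH YB = ((hq y).choose.1, (hq y).choose.2, y) := by
    rw [CORE, dif_pos h1, dif_pos (hq y)]
  obtain ⟨hp1, hp2, hp3, hp4⟩ := (hq y).choose_spec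
  have hpE : (hq y).choose.1 ∉ EXCL :=
    fun h => hp2 (Set.mem_union_left _ (Set.mem_union_left _ h))
  have hpCH : (hq y).choose.1 ∉ CH :=
    fun h => hp2 (Set.mem_union_left _ (Set.mem_union_right _ h))
  have hpY1 : ∀ y' ∈ YB, y' ∉ (hq y).choose.1 :=
    fun y' hy' hm => hp2 (Set.mem_union_right _ ⟨hp1, Or.inl ⟨y', hy', hm⟩⟩)
  have hpY2 : y ∉ (hq y).choose.1 :=
    fun hm => hp2 (Set.mem_union_right _ ⟨hp1, Or.inr hm⟩)
  have hyE : y ∈ ELset c h1.choose := union_mem_ELset c hE2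
  have hyB : y ∈ ELset c B := ELset_mono hE1 hyE
  have hyCH : y ∉ ⋃₀ CH := by
    intro hy
    have : y ∈ ELset c h1.choose ∩ ⋃₀ CH := ⟨hyE, hy⟩
    rw [hE3] at this
    exact this
  rw [hval]
  exact ⟨hp1, hpE, hpCH, hpY1, hpY2, hp3, hp4, hyB, hyCH⟩

end Round

section RoundMain

open scoped Classical

lemma roundLemma (M : Set (Set ℕ)) (𝓕 : Set (Set (Set ℕ)))
    (hCR : ∀ G ⊆ 𝓕, CompletelyRamsey (⋃₀ G))
    (hpf : PointFinite 𝓕)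
    (hbig : ∀ (a : Finset ℕ) (A : Set ℕ), A.Infinite → (M ∩ ELset a A).Nonempty →
      ∃ (b : Finset ℕ) (B : Set ℕ), B.Infinite ∧ ELset b B ⊆ ELset a A ∧
        (M ∩ ELset b B).Nonempty ∧
        #{S : Set (Set ℕ) | ∃ F ∈ 𝓕, S = F ∩ ELset b B} = continuum)
    (cs : Finset ℕ) (Cs : Set ℕ)
    (hdense : ∀ (c' : Finset ℕ) (D : Set ℕ), D.Infinite → ELset c' D ⊆ ELset cs Cs →
      (M ∩ ELset c' D).Nonempty)
    (c : Finset ℕ) (D : Set ℕ) (hD : D.Infinite) (hsub : ELset c D ⊆ ELset cs Cs)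
    (EXCL : Set (Set (Set ℕ))) (hEX : #↥EXCL < continuum) :
    ∃ (d : ℕ) (D' : Set ℕ) (𝓐 : Set (Set (Set ℕ))),
      d ∈ D ∧ d ∉ c ∧ D'.Infinite ∧ D' ⊆ D ∧ d ∉ D' ∧
      ELset (insert d c) D' ⊆ ELset c D ∧
      ELset (insert d c) D' ⊆ ⋃₀ 𝓐 ∧
      𝓐 ⊆ 𝓕 ∧ (∀ F ∈ 𝓐, F ∉ EXCL) ∧ #↥𝓐 < continuum := by
  classical
  -- the pick lemma
  have pick : ∀ (B : Set ℕ), B ⊆ D → B.Infinite →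
      ∀ (Forb : Set (Set (Set ℕ))), #↥Forb < continuum →
      ∃ p : Set (Set ℕ) × Set ℕ, p.1 ∈ 𝓕 ∧ p.1 ∉ Forb ∧ p.2 ∈ p.1 ∧ p.2 ∈ ELset c B := by
    intro B hBD hBinf Forb hForb
    have hM : (M ∩ ELset c B).Nonempty := hdense c B hBinf ((ELset_mono hBD).trans hsub)
    obtain ⟨b', B', hB'inf, hB'sub, hB'M, htr⟩ := hbig c B hBinf hM
    set T := {S : Set (Set ℕ) | ∃ F ∈ 𝓕, S = F ∩ ELset b' B'} with hT
    set bad : Set (Set (Set ℕ)) := insert ∅ ((fun F => F ∩ ELset b' B') '' Forb) with hbaddef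
    have hbad : #↥bad < continuum := by
      refine lt_of_le_of_lt mk_insert_le ?_
      refine add_lt_of_lt aleph0_le_continuum (lt_of_le_of_lt mk_image_le hForb) ?_
      exact one_lt_aleph0.trans aleph0_lt_continuum
    have hnotsub : ¬ T ⊆ bad := by
      intro hsubbad
      have h1 := mk_le_mk_of_subset hsubbad
      rw [htr] at h1
      exact absurd (h1.trans_lt hbad) (lt_irrefl _)
    obtain ⟨S, hST, hSbad⟩ := Set.not_subset.mp hnotsub
    obtain ⟨F, hF𝓕, rfl⟩ := hST
    have hFne : (F ∩ ELset b' B').Nonempty := by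
      rcases Set.eq_empty_or_nonempty (F ∩ ELset b' B') with h | h
      · exact absurd (h ▸ Set.mem_insert _ _) hSbad
      · exact h
    obtain ⟨X, hXF, hXel⟩ := hFne
    have hFForb : F ∉ Forb := fun h => hSbad (Set.mem_insert_of_mem _ ⟨F, h, rfl⟩)
    exact ⟨(F, X), hF𝓕, hFForb, hXF, hB'sub hXel⟩
  -- tasks and a surjection from Idx
  have hτne : Nonempty {B : Set ℕ // B ⊆ D ∧ B.Infinite} := ⟨⟨D, subset_rfl, hD⟩⟩
  have hτle : #{B : Set ℕ // B ⊆ D ∧ B.Infinite} ≤ continuum :=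
    (mk_subtype_le _).trans (le_of_eq mk_setNat)
  obtain ⟨π, hπ⟩ := exists_surj_Idx hτne hτle
  -- the recursion
  have wf : WellFounded ((· < ·) : Idx → Idx → Prop) := IsWellFounded.wf
  set g : Idx → Str := wf.fix (fun i rec =>
    CORE 𝓕 EXCL c (π i).1
      {S | ∃ j, ∃ h : j < i, S = (rec j h).1}
      {y | ∃ j, ∃ h : j < i, y = (rec j h).2.2}) with hgdef
  set Ch : Idx → Set (Set (Set ℕ)) := fun i => {S | ∃ j, ∃ _ : j < i, S = (g j).1} with hChdef
  set Yb : Idx → Set (Set ℕ) := fun i => {y | ∃ j, ∃ _ : j < i, y = (g j).2.2} with hYbdef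
  have hgeq : ∀ i, g i = CORE 𝓕 EXCL c (π i).1 (Ch i) (Yb i) := by
    intro i
    rw [hgdef]
    exact WellFounded.fix_eq _ _ i
  -- cardinalities
  have hChcard : ∀ i, #↥(Ch i) < continuum := by
    intro i
    have hss : Ch i ⊆ (fun j => (g j).1) '' (Set.Iio i) := by
      rintro S ⟨j, hj, rfl⟩
      exact ⟨j, hj, rfl⟩
    exact ((mk_le_mk_of_subset hss).trans mk_image_le).trans_lt (mk_Iio_Idx i)
  have hYbcard : ∀ i, #↥(Yb i) < continuum := by
    intro i
    have hss : Yb i ⊆ (fun j => (g j).2.2) '' (Set.Iio i) := by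
      rintro S ⟨j, hj, rfl⟩
      exact ⟨j, hj, rfl⟩
    exact ((mk_le_mk_of_subset hss).trans mk_image_le).trans_lt (mk_Iio_Idx i)
  -- the choice hypothesis for CORE_spec
  have hqAll : ∀ i, ∀ y : Set ℕ, ∃ p : Set (Set ℕ) × Set ℕ, p.1 ∈ 𝓕 ∧
      p.1 ∉ (EXCL ∪ Ch i ∪ {G | G ∈ 𝓕 ∧ ((∃ y' ∈ Yb i, y' ∈ G) ∨ y ∈ G)}) ∧
      p.2 ∈ p.1 ∧ p.2 ∈ ELset c (π i).1 := by
    intro i y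
    have h3sub : {G | G ∈ 𝓕 ∧ ((∃ y' ∈ Yb i, y' ∈ G) ∨ y ∈ G)}
        ⊆ ⋃ y' ∈ insert y (Yb i), {G | G ∈ 𝓕 ∧ y' ∈ G} := by
      rintro G ⟨hG, h | h⟩
      · obtain ⟨y', hy', hmem⟩ := h
        exact Set.mem_biUnion (Set.mem_insert_of_mem _ hy') ⟨hG, hmem⟩
      · exact Set.mem_biUnion (Set.mem_insert _ _) ⟨hG, h⟩
    have hY' : #↥(insert y (Yb i)) < continuum := by
      refine lt_of_le_of_lt mk_insert_le ?_
      exact add_lt_of_lt aleph0_le_continuum (hYbcard i)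
        (one_lt_aleph0.trans aleph0_lt_continuum)
    haveI : Nonempty ↥(insert y (Yb i)) := ⟨⟨y, Set.mem_insert _ _⟩⟩
    have hsup : ⨆ (y' : ↥(insert y (Yb i))), #↥{G | G ∈ 𝓕 ∧ (y' : Set ℕ) ∈ G} ≤ ℵ₀ := by
      refine ciSup_le' ?_
      intro y'
      have hfin : {G | G ∈ 𝓕 ∧ (y' : Set ℕ) ∈ G}.Finite := hpf (y' : Set ℕ)
      haveI := hfin.countable.to_subtype
      exact mk_le_aleph0
    have h3card : #↥{G | G ∈ 𝓕 ∧ ((∃ y' ∈ Yb i, y' ∈ G) ∨ y ∈ G)} < continuum := by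
      refine lt_of_le_of_lt (mk_le_mk_of_subset h3sub) ?_
      refine lt_of_le_of_lt (mk_biUnion_le _ _) ?_
      refine lt_of_le_of_lt (mul_le_mul' le_rfl hsup) ?_
      exact mul_lt_of_lt aleph0_le_continuum hY' aleph0_lt_continuum
    have hforb : #↥(EXCL ∪ Ch i ∪ {G | G ∈ 𝓕 ∧ ((∃ y' ∈ Yb i, y' ∈ G) ∨ y ∈ G)}) < continuum := by
      refine lt_of_le_of_lt (mk_union_le _ _) ?_
      refine add_lt_of_lt aleph0_le_continuum ?_ h3card
      refine lt_of_le_of_lt (mk_union_le _ _) ?_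
      exact add_lt_of_lt aleph0_le_continuum hEX (hChcard i)
    exact pick (π i).1 (π i).2.1 (π i).2.2 _ hforb
  -- stage specification
  have hspec : ∀ i, (∃ E, E ⊆ ((π i : {B : Set ℕ // B ⊆ D ∧ B.Infinite}) : Set ℕ) ∧ E.Infinite ∧ ELset c E ∩ ⋃₀ (Ch i) = ∅) →
      (g i).1 ∈ 𝓕 ∧ (g i).1 ∉ EXCL ∧ (g i).1 ∉ Ch i ∧
      (∀ y' ∈ Yb i, y' ∉ (g i).1) ∧ (g i).2.2 ∉ (g i).1 ∧
      (g i).2.1 ∈ (g i).1 ∧ (g i).2.1 ∈ ELset c (π i).1 ∧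
      (g i).2.2 ∈ ELset c (π i).1 ∧ (g i).2.2 ∉ ⋃₀ (Ch i) := by
    intro i h1
    rw [hgeq i]
    exact CORE_spec 𝓕 EXCL c (π i).1 (Ch i) (Yb i) h1 (hqAll i)
  by_cases hstuck : ∃ i, ¬ ∃ E, E ⊆ ((π i : {B : Set ℕ // B ⊆ D ∧ B.Infinite}) : Set ℕ) ∧ E.Infinite ∧ ELset c E ∩ ⋃₀ (Ch i) = ∅
  · -- stuck case : capture
    obtain ⟨i₀, hi₀, hmin⟩ := wf.has_min _ hstuck
    have hns : ∀ j, j < i₀ → ∃ E, E ⊆ ((π j : {B : Set ℕ // B ⊆ D ∧ B.Infinite}) : Set ℕ) ∧ E.Infinite ∧ ELset c E ∩ ⋃₀ (Ch j) = ∅ := by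
      intro j hj
      by_contra hcon
      exact hmin j hcon hj
    have hChsub : Ch i₀ ⊆ 𝓕 := by
      rintro S ⟨j, hj, rfl⟩
      exact (hspec j (hns j hj)).1
    obtain ⟨B₁, hB₁sub, hB₁inf, hdi⟩ := hCR (Ch i₀) hChsub c (π i₀).1 (π i₀).2.2
    rcases hdi with hleft | hright
    · obtain ⟨d, hd1, hd2⟩ := (hB₁inf.diff c.finite_toSet).nonempty
      have hdB₁ : d ∈ B₁ := hd1
      have hdc : d ∉ (c : Set ℕ) := hd2
      have hB₁D : B₁ ⊆ D := hB₁sub.trans (π i₀).2.1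
      refine ⟨d, B₁ \ ↑(insert d c), Ch i₀, hB₁D hdB₁, by exact_mod_cast hdc, ?_, ?_, ?_, ?_, ?_, hChsub, ?_, hChcard i₀⟩
      · exact hB₁inf.diff (Finset.finite_toSet _)
      · exact Set.diff_subset.trans hB₁D
      · intro h
        exact h.2 (by simp)
      · refine ELset_sub ?_ ?_ ?_
        · exact_mod_cast Finset.subset_insert d c
        · intro x hx
          rcases Finset.mem_insert.mp (by exact_mod_cast hx) with rfl | hxc
          · exact Set.mem_union_right _ (hB₁D hdB₁)
          · exact Set.mem_union_left _ (by exact_mod_cast hxc)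
        · exact Set.diff_subset.trans hB₁D
      · refine subset_trans (ELset_sub ?_ ?_ ?_) hleft
        · exact_mod_cast Finset.subset_insert d c
        · intro x hx
          rcases Finset.mem_insert.mp (by exact_mod_cast hx) with rfl | hxc
          · exact Set.mem_union_right _ hdB₁
          · exact Set.mem_union_left _ (by exact_mod_cast hxc)
        · exact Set.diff_subset
      · rintro F ⟨j, hj, rfl⟩
        exact (hspec j (hns j hj)).2.1
    · exfalso
      exact hi₀ ⟨B₁, hB₁sub, hB₁inf, hright⟩
  · -- no stage is stuck : contradiction with hCR
    exfalso
    push_neg at hstuck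
    have hFamsub : {S | ∃ i : Idx, S = (g i).1} ⊆ 𝓕 := by
      rintro S ⟨i, rfl⟩
      exact (hspec i (hstuck i)).1
    obtain ⟨B₁, hB₁sub, hB₁inf, hdi⟩ := hCR _ hFamsub c D hD
    obtain ⟨i, hi⟩ := hπ ⟨B₁, hB₁sub, hB₁inf⟩
    have hB₁eq : ((π i : {B : Set ℕ // B ⊆ D ∧ B.Infinite}) : Set ℕ) = B₁ := by rw [hi]
    have hspeci := hspec i (hstuck i)
    rcases hdi with hleft | hright
    · have hy : (g i).2.2 ∈ ELset c B₁ := hB₁eq ▸ hspeci.2.2.2.2.2.2.2.1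
      obtain ⟨S, hSFam, hyS⟩ := hleft hy
      obtain ⟨i', rfl⟩ := hSFam
      rcases lt_trichotomy i' i with h | h | h
      · exact hspeci.2.2.2.2.2.2.2.2 ⟨(g i').1, ⟨i', h, rfl⟩, hyS⟩
      · subst h
        exact hspeci.2.2.2.2.1 hyS
      · exact (hspec i' (hstuck i')).2.2.2.1 (g i).2.2 ⟨i, h, rfl⟩ hyS
    · have hX1 : (g i).2.1 ∈ ELset c B₁ := hB₁eq ▸ hspeci.2.2.2.2.2.2.1
      have hX2 : (g i).2.1 ∈ ⋃₀ {S | ∃ i : Idx, S = (g i).1} :=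
        ⟨(g i).1, ⟨i, rfl⟩, hspeci.2.2.2.2.2.1⟩
      have : (g i).2.1 ∈ ELset c B₁ ∩ ⋃₀ {S | ∃ i : Idx, S = (g i).1} := ⟨hX1, hX2⟩
      rw [hright] at this
      exact this

end RoundMain

/-- If `M` is not nowhere Ramsey, `𝓕` is a point-finite cover of `M` by nowhere Ramsey
sets, and every Ellentuck basic set meeting `M` contains a basic set meeting `M` on which
the restricted family has cardinality continuum, then some subfamily `𝓕' ⊆ 𝓕` has a
union that is not completely Ramsey. -/
theorem exists_subfamily_not_completelyRamsey (M : Set (Set ℕ))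
    (hM : ¬ NowhereRamsey M)
    (𝓕 : Set (Set (Set ℕ))) (hpf : PointFinite 𝓕)
    (hmem : ∀ F ∈ 𝓕, NowhereRamsey F) (hcov : M ⊆ ⋃₀ 𝓕)
    (hbig : ∀ (a : Finset ℕ) (A : Set ℕ), A.Infinite → (M ∩ ELset a A).Nonempty →
      ∃ (b : Finset ℕ) (B : Set ℕ), B.Infinite ∧ ELset b B ⊆ ELset a A ∧
        (M ∩ ELset b B).Nonempty ∧
        #{S : Set (Set ℕ) | ∃ F ∈ 𝓕, S = F ∩ ELset b B} = continuum) :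
    ∃ 𝓕' ⊆ 𝓕, ¬ CompletelyRamsey (⋃₀ 𝓕') := by
  classical
  by_contra hgoal
  push_neg at hgoal
  have hCR : ∀ G ⊆ 𝓕, CompletelyRamsey (⋃₀ G) := hgoal
  rw [NowhereRamsey] at hM
  push_neg at hM
  obtain ⟨a₀, A₀, hA₀inf, hw'⟩ := hM
  have hw : ∀ B, B ⊆ A₀ → B.Infinite → (M ∩ ELset a₀ B).Nonempty := by
    intro B hB hBinf
    rw [Set.inter_comm]
    exact hw' B hB hBinf
  obtain ⟨cs, Cs, hCsinf, hdense⟩ := exists_Mdense M a₀ A₀ hA₀inf hw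
  -- the chain of rounds
  set St := {p : Finset ℕ × Set ℕ × Set (Set (Set ℕ)) //
      p.2.1.Infinite ∧ ELset p.1 p.2.1 ⊆ ELset cs Cs ∧ #↥p.2.2 < continuum} with hStdef
  have hR : ∀ (s : St),
      ∃ (d : ℕ) (D' : Set ℕ) (𝓐 : Set (Set (Set ℕ))),
      d ∈ s.1.2.1 ∧ d ∉ s.1.1 ∧ D'.Infinite ∧ D' ⊆ s.1.2.1 ∧ d ∉ D' ∧
      ELset (insert d s.1.1) D' ⊆ ELset s.1.1 s.1.2.1 ∧
      ELset (insert d s.1.1) D' ⊆ ⋃₀ 𝓐 ∧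
      𝓐 ⊆ 𝓕 ∧ (∀ F ∈ 𝓐, F ∉ s.1.2.2) ∧ #↥𝓐 < continuum := by
    intro s
    exact roundLemma M 𝓕 hCR hpf hbig cs Cs hdense s.1.1 s.1.2.1 s.2.1 s.2.2.1 s.1.2.2 s.2.2.2
  choose fd fD' f𝓐 h1 h2 h3 h4 h5 h6 h7 h8 h9 h10 using hR
  let step : St → St := fun s =>
    ⟨(insert (fd s) s.1.1, fD' s, s.1.2.2 ∪ f𝓐 s),
      h3 s, (h6 s).trans s.2.2.1,
      lt_of_le_of_lt (mk_union_le _ _)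
        (add_lt_of_lt aleph0_le_continuum s.2.2.2 (h10 s))⟩
  have hbase : #↥(∅ : Set (Set (Set ℕ))) < continuum := by
    simp only [mk_eq_zero]
    exact continuum_pos
  let chain : ℕ → St := fun n => step^[n] ⟨(cs, Cs, ∅), hCsinf, subset_rfl, hbase⟩
  have chain_succ : ∀ n, chain (n+1) = step (chain n) := by
    intro n; simp only [chain, Function.iterate_succ_apply']
  -- abbreviations
  set cF : ℕ → Finset ℕ := fun n => (chain n).1.1 with hcF
  set DF : ℕ → Set ℕ := fun n => (chain n).1.2.1 with hDF
  set EXF : ℕ → Set (Set (Set ℕ)) := fun n => (chain n).1.2.2 with hEXF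
  set dF : ℕ → ℕ := fun n => fd (chain n) with hdF
  set AF : ℕ → Set (Set (Set ℕ)) := fun n => f𝓐 (chain n) with hAF
  have hc_succ : ∀ n, cF (n+1) = insert (dF n) (cF n) := by
    intro n; simp only [cF, dF, chain_succ n, step]
  have hD_succ : ∀ n, DF (n+1) = fD' (chain n) := by
    intro n; simp only [DF, chain_succ n, step]
  have hEX_succ : ∀ n, EXF (n+1) = EXF n ∪ AF n := by
    intro n; simp only [EXF, AF, chain_succ n, step]
  have hd_in : ∀ n, dF n ∈ DF n := fun n => h1 (chain n)
  have hd_notc : ∀ n, dF n ∉ cF n := fun n => h2 (chain n)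
  have hDsub : ∀ n, DF (n+1) ⊆ DF n := by
    intro n; rw [hD_succ n]; exact h4 (chain n)
  have hd_notD' : ∀ n, dF n ∉ DF (n+1) := by
    intro n; rw [hD_succ n]; exact h5 (chain n)
  have hcap : ∀ n, ELset (cF (n+1)) (DF (n+1)) ⊆ ⋃₀ AF n := by
    intro n; rw [hc_succ n, hD_succ n]; exact h7 (chain n)
  have hA𝓕 : ∀ n, AF n ⊆ 𝓕 := fun n => h8 (chain n)
  have hAnotEX : ∀ n, ∀ F ∈ AF n, F ∉ EXF n := fun n => h9 (chain n)
  have hDmono : ∀ n m, n ≤ m → DF m ⊆ DF n := by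
    intro n m h
    induction m with
    | zero => simp_all
    | succ k ih =>
      rcases Nat.lt_or_ge n (k+1) with h' | h'
      · exact (hDsub k).trans (ih (Nat.lt_succ_iff.mp h'))
      · have : n = k + 1 := le_antisymm h h'
        subst this; rfl
  have hcmono : ∀ n m, n ≤ m → (cF n : Set ℕ) ⊆ (cF m : Set ℕ) := by
    intro n m h
    induction m with
    | zero => simp_all
    | succ k ih =>
      rcases Nat.lt_or_ge n (k+1) with h' | h'
      · refine (ih (Nat.lt_succ_iff.mp h')).trans ?_
        rw [hc_succ k]
        exact_mod_cast Finset.subset_insert _ _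
      · have : n = k + 1 := le_antisymm h h'
        subst this; rfl
  have hEXmono : ∀ n m, n ≤ m → EXF n ⊆ EXF m := by
    intro n m h
    induction m with
    | zero => rw [Nat.le_zero.mp h]
    | succ k ih =>
      rcases Nat.lt_or_ge n (k+1) with h' | h'
      · refine (ih (Nat.lt_succ_iff.mp h')).trans ?_
        rw [hEX_succ k]
        exact Set.subset_union_left
      · have : n = k + 1 := le_antisymm h h'
        subst this; rfl
  have hAEX : ∀ n m, n < m → AF n ⊆ EXF m := by
    intro n m h
    refine subset_trans ?_ (hEXmono (n+1) m h)
    rw [hEX_succ n]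
    exact Set.subset_union_right
  have hdinj : Function.Injective dF := by
    have hne : ∀ n m, n < m → dF n ≠ dF m := by
      intro n m h hEq
      have : dF m ∈ DF (n+1) := hDmono (n+1) m h (hd_in m)
      rw [← hEq] at this
      exact hd_notD' n this
    intro n m hnm
    by_contra hne'
    rcases Nat.lt_or_ge n m with h | h
    · exact hne n m h hnm
    · exact hne m n (lt_of_le_of_ne h (Ne.symm hne')) hnm.symm
  set X : Set ℕ := ⋃ n, (cF n : Set ℕ) with hXdef
  have hcX : ∀ n, (cF n : Set ℕ) ⊆ X := fun n => Set.subset_iUnion (fun n => (cF n : Set ℕ)) n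
  have hdX : ∀ n, dF n ∈ X := by
    intro n
    apply hcX (n+1)
    rw [hc_succ n]
    exact_mod_cast Finset.mem_insert_self _ _
  have hXinf : X.Infinite := Set.infinite_of_injective_forall_mem hdinj hdX
  have hcsub : ∀ n m, (cF m : Set ℕ) ⊆ ↑(cF n) ∪ DF n := by
    intro n m
    rcases le_or_gt m n with h | h
    · exact (hcmono m n h).trans Set.subset_union_left
    · -- m > n
      have haux : ∀ k, (cF (n + k) : Set ℕ) ⊆ ↑(cF n) ∪ DF n := by
        intro k
        induction k with
        | zero => simp
        | succ j ih =>
          rw [show n + (j+1) = (n+j) + 1 by omega, hc_succ (n+j)]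
          intro x hx
          rcases Finset.mem_insert.mp (by exact_mod_cast hx) with rfl | hxc
          · exact Set.mem_union_right _ (hDmono n (n+j) (by omega) (hd_in (n+j)))
          · exact ih (by exact_mod_cast hxc)
      have : m = n + (m - n) := by omega
      rw [this]
      exact haux (m - n)
  have hXmem : ∀ n, X ∈ ELset (cF (n+1)) (DF (n+1)) := by
    intro n
    refine ⟨hXinf, hcX (n+1), ?_⟩
    rw [hXdef]
    exact Set.iUnion_subset (fun m => hcsub (n+1) m)
  have hXcap : ∀ n, X ∈ ⋃₀ AF n := fun n => hcap n (hXmem n)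
  have hG : ∀ n, ∃ G, G ∈ AF n ∧ X ∈ G := by
    intro n
    obtain ⟨G, hG1, hG2⟩ := hXcap n
    exact ⟨G, hG1, hG2⟩
  choose G hGA hGX using hG
  have hGinj : Function.Injective G := by
    have hne : ∀ n m, n < m → G n ≠ G m := by
      intro n m h hEq
      have h1' : G m ∈ EXF m := hAEX n m h (hEq ▸ hGA n)
      exact hAnotEX m (G m) (hGA m) h1'
    intro n m hnm
    by_contra hne'
    rcases Nat.lt_or_ge n m with h | h
    · exact hne n m h hnm
    · exact hne m n (lt_of_le_of_ne h (Ne.symm hne')) hnm.symm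
  have hrange : Set.range G ⊆ {F | F ∈ 𝓕 ∧ X ∈ F} := by
    rintro F ⟨n, rfl⟩
    exact ⟨hA𝓕 n (hGA n), hGX n⟩
  have hfin : {F | F ∈ 𝓕 ∧ X ∈ F}.Finite := hpf X
  exact (Set.infinite_range_of_injective hGinj) (hfin.subset hrange)
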